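/- Let h : ℝ^d → [0,1] be measurable and ĥ(x) = E_{Z ∼ N(0, σ²I_d)}[h(x + Z)] for σ > 0. Then for all x, δ ∈ ℝ^d, |ĥ(x + δ) − ĥ(x)| ≤ (‖δ‖₂/σ) · sup_{s∈[0,1]} φ(Φ⁻¹(s)) = ‖δ‖₂/(σ√(2π)); in particular ĥ is (1/(σ√(2π)))-Lipschitz. -/

import Mathlib

open MeasureTheory

open ProbabilityTheory

/-- Density of `N(0, σ²I_d)` on `ℝ^d`. -/
noncomputable def gpdfs (d : ℕ) (σ : ℝ) (w : EuclideanSpace ℝ (Fin d)) : ℝ :=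
  (2 * Real.pi * σ ^ 2) ^ (-(d : ℝ) / 2) * Real.exp (-‖w‖ ^ 2 / (2 * σ ^ 2))

/-- Gaussian smoothing `ĥ(x) = E_{Z ∼ N(0, σ²I_d)}[h(x + Z)]`. -/
noncomputable def gsmooth (d : ℕ) (σ : ℝ) (h : EuclideanSpace ℝ (Fin d) → ℝ)
    (x : EuclideanSpace ℝ (Fin d)) : ℝ :=
  ∫ z, h (x + z) * gpdfs d σ z

noncomputable def gV (σ : ℝ) : NNReal := ⟨σ^2, sq_nonneg σ⟩

lemma gV_coe (σ : ℝ) : ((gV σ : NNReal) : ℝ) = σ^2 := rfl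

lemma gpdfs_nonneg (d : ℕ) (σ : ℝ) (w : EuclideanSpace ℝ (Fin d)) : 0 ≤ gpdfs d σ w := by
  unfold gpdfs; positivity

lemma gpdfs_measurable (d : ℕ) (σ : ℝ) : Measurable (gpdfs d σ) := by
  unfold gpdfs
  exact (((measurable_norm.pow_const 2).neg.div_const _).exp.const_mul _)

lemma gpdfs_prod (d : ℕ) {σ : ℝ} (hσ : 0 < σ) (y : EuclideanSpace ℝ (Fin d)) :
    gpdfs d σ y = ∏ i, gaussianPDFReal 0 (gV σ) (y i) := by
  have h0 : (0:ℝ) ≤ 2 * Real.pi * σ ^ 2 := by positivity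
  have hc : (2 * Real.pi * σ ^ 2) ^ (-(d : ℝ) / 2)
      = ((Real.sqrt (2 * Real.pi * σ ^ 2))⁻¹) ^ d := by
    rw [show (-(d : ℝ) / 2) = (1/2 : ℝ) * (-(d:ℝ)) by ring, Real.rpow_mul h0,
      ← Real.sqrt_eq_rpow, Real.rpow_neg (Real.sqrt_nonneg _), Real.rpow_natCast, inv_pow]
  have hn : ‖y‖ ^ 2 = ∑ i, (y i) ^ 2 := by
    rw [EuclideanSpace.norm_eq, Real.sq_sqrt (by positivity)]
    simp [Real.norm_eq_abs, sq_abs]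
  unfold gaussianPDFReal
  simp only [gV_coe, sub_zero]
  rw [Finset.prod_mul_distrib, Finset.prod_const, Finset.card_univ, Fintype.card_fin,
    ← Real.exp_sum, gpdfs, hc, hn]
  congr 1
  rw [← Finset.sum_div, ← Finset.sum_neg_distrib]

lemma gpdfs_integrable (d : ℕ) {σ : ℝ} (hσ : 0 < σ) : Integrable (gpdfs d σ) := by
  have hprod : Integrable (fun x : Fin d → ℝ => ∏ i, gaussianPDFReal 0 (gV σ) (x i)) :=
    Integrable.fintype_prod (fun _ => integrable_gaussianPDFReal _ _)
  have hmp := (EuclideanSpace.volume_preserving_symm_measurableEquiv_toLp (Fin d)).symm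
  rw [← hmp.integrable_comp_emb (MeasurableEquiv.toLp 2 (Fin d → ℝ)).symm.symm.measurableEmbedding]
  have : (gpdfs d σ) ∘ ⇑(MeasurableEquiv.toLp 2 (Fin d → ℝ)).symm.symm
      = fun x : Fin d → ℝ => ∏ i, gaussianPDFReal 0 (gV σ) (x i) := by
    funext x
    exact gpdfs_prod d hσ _
  rw [this]
  exact hprod

lemma gV_ne_zero {σ : ℝ} (hσ : 0 < σ) : gV σ ≠ 0 := by
  refine NNReal.coe_ne_zero.mp ?_
  rw [gV_coe]
  positivity

lemma lemA (d : ℕ) {σ : ℝ} (hσ : 0 < σ) (u : EuclideanSpace ℝ (Fin d)) (hu : ‖u‖ = 1)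
    (f : ℝ → ℝ) :
    ∫ w, f (inner ℝ u w : ℝ) * gpdfs d σ w = ∫ t, f t * gaussianPDFReal 0 (gV σ) t := by
  have hd : d ≠ 0 := by
    rintro rfl
    have : u = 0 := Subsingleton.elim _ _
    rw [this, norm_zero] at hu
    exact one_ne_zero hu.symm
  haveI : NeZero d := ⟨hd⟩
  -- orthonormal basis with b 0 = u
  have hon : Orthonormal ℝ (({0} : Set (Fin d)).restrict (fun _ => u)) := by
    constructor
    · intro i; exact hu
    · intro i j hij
      exact absurd (Subtype.ext (by
        rw [Set.mem_singleton_iff.mp i.2, Set.mem_singleton_iff.mp j.2])) hij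
  obtain ⟨b, hb⟩ := hon.exists_orthonormalBasis_extension_of_card_eq
    (by simp [finrank_euclideanSpace_fin]) (v := fun _ => u)
  have hb0 : b 0 = u := hb 0 rfl
  -- rewrite integrand through b.repr
  have h1 : ∀ w : EuclideanSpace ℝ (Fin d),
      f (inner ℝ u w : ℝ) * gpdfs d σ w = f (b.repr w 0) * gpdfs d σ (b.repr w) := by
    intro w
    rw [b.repr_apply_apply, hb0]
    congr 1
    unfold gpdfs
    rw [b.repr.norm_map]
  simp_rw [h1]
  have hc1 := b.measurePreserving_repr.integral_comp b.repr.toHomeomorph.measurableEmbedding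
    (fun y : EuclideanSpace ℝ (Fin d) => f (y 0) * gpdfs d σ y)
  rw [show (∫ w, f (b.repr w 0) * gpdfs d σ (b.repr w))
      = ∫ y : EuclideanSpace ℝ (Fin d), f (y 0) * gpdfs d σ y from hc1]
  -- now over EuclideanSpace, move to pi
  have hmp := (EuclideanSpace.volume_preserving_symm_measurableEquiv_toLp (Fin d)).symm
  have hc2 := hmp.integral_comp
    (MeasurableEquiv.toLp 2 (Fin d → ℝ)).symm.symm.measurableEmbedding
    (fun y : EuclideanSpace ℝ (Fin d) => f (y 0) * gpdfs d σ y)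
  rw [← hc2]
  have h2 : ∀ x : Fin d → ℝ,
      f (((MeasurableEquiv.toLp 2 (Fin d → ℝ)).symm.symm x) 0)
        * gpdfs d σ ((MeasurableEquiv.toLp 2 (Fin d → ℝ)).symm.symm x)
      = ∏ i, (fun t => (if i = 0 then f t else 1) * gaussianPDFReal 0 (gV σ) t) (x i) := by
    intro x
    rw [gpdfs_prod d hσ]
    have hx : ∀ i, ((MeasurableEquiv.toLp 2 (Fin d → ℝ)).symm.symm x) i = x i := fun _ => rfl
    simp only [hx]
    rw [Finset.prod_mul_distrib, Finset.prod_ite_eq' Finset.univ (0 : Fin d)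
      (fun i => f (x i))]
    simp
  simp_rw [h2]
  rw [MeasureTheory.volume_pi, MeasureTheory.integral_fintype_prod_eq_prod (f := fun (i : Fin d) (t : ℝ) =>
    (if i = 0 then f t else 1) * gaussianPDFReal 0 (gV σ) t)]
  have h3 : ∀ i : Fin d,
      (∫ t, (if i = 0 then f t else 1) * gaussianPDFReal 0 (gV σ) t)
      = if i = 0 then (∫ t, f t * gaussianPDFReal 0 (gV σ) t) else 1 := by
    intro i
    by_cases hi : i = 0
    · simp [hi]
    · simp only [if_neg hi, one_mul]
      exact integral_gaussianPDFReal_eq_one 0 (gV_ne_zero hσ)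
  rw [Finset.prod_congr rfl (fun i _ => h3 i), Finset.prod_ite_eq' Finset.univ (0 : Fin d)
    (fun _ => (∫ t, f t * gaussianPDFReal 0 (gV σ) t))]
  simp

lemma gpdfs_shift (d : ℕ) {σ : ℝ} (hσ : 0 < σ) (δ w : EuclideanSpace ℝ (Fin d)) :
    gpdfs d σ (w - δ)
      = Real.exp ((2 * (inner ℝ δ w : ℝ) - ‖δ‖^2) / (2 * σ^2)) * gpdfs d σ w := by
  have h2 : ‖w - δ‖^2 = ‖w‖^2 - 2 * (inner ℝ δ w : ℝ) + ‖δ‖^2 := by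
    rw [norm_sub_sq_real, real_inner_comm]
  unfold gpdfs
  rw [h2, show Real.exp ((2 * (inner ℝ δ w : ℝ) - ‖δ‖^2) / (2 * σ^2)) *
      ((2 * Real.pi * σ ^ 2) ^ (-(d : ℝ) / 2) * Real.exp (-‖w‖ ^ 2 / (2 * σ ^ 2)))
    = (2 * Real.pi * σ ^ 2) ^ (-(d : ℝ) / 2) *
      (Real.exp ((2 * (inner ℝ δ w : ℝ) - ‖δ‖^2) / (2 * σ^2)) *
        Real.exp (-‖w‖ ^ 2 / (2 * σ ^ 2))) by ring, ← Real.exp_add]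
  congr 1
  have hσ2 : (2 : ℝ) * σ^2 ≠ 0 := by positivity
  field_simp
  ring

lemma pdf_shift {σ : ℝ} (hσ : 0 < σ) (r t : ℝ) :
    gaussianPDFReal r (gV σ) t
      = Real.exp ((2 * r * t - r^2) / (2 * σ^2)) * gaussianPDFReal 0 (gV σ) t := by
  unfold gaussianPDFReal
  simp only [gV_coe, sub_zero]
  rw [show Real.exp ((2 * r * t - r^2) / (2 * σ^2)) *
      ((Real.sqrt (2 * Real.pi * σ^2))⁻¹ * Real.exp (-t ^ 2 / (2 * σ ^ 2)))
    = (Real.sqrt (2 * Real.pi * σ^2))⁻¹ *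
      (Real.exp ((2 * r * t - r^2) / (2 * σ^2)) * Real.exp (-t ^ 2 / (2 * σ ^ 2))) by ring,
    ← Real.exp_add]
  congr 1
  have hσ2 : (2 : ℝ) * σ^2 ≠ 0 := by positivity
  field_simp
  ring

lemma oneD {σ : ℝ} (hσ : 0 < σ) {r : ℝ} (hr : 0 < r) :
    ∫ t, max (gaussianPDFReal r (gV σ) t - gaussianPDFReal 0 (gV σ) t) 0
      ≤ r / (σ * Real.sqrt (2 * Real.pi)) := by
  set p : ℝ → ℝ → ℝ := fun μ t => gaussianPDFReal μ (gV σ) t with hp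
  have hσ2 : (0 : ℝ) < 2 * σ^2 := by positivity
  have hmono : ∀ a b t : ℝ, (t - a)^2 ≤ (t - b)^2 → p b t ≤ p a t := by
    intro a b t hab
    show gaussianPDFReal b (gV σ) t ≤ gaussianPDFReal a (gV σ) t
    unfold gaussianPDFReal
    simp only [gV_coe]
    refine mul_le_mul_of_nonneg_left (Real.exp_le_exp.mpr ?_) (by positivity)
    rw [div_le_div_iff_of_pos_right hσ2]
    linarith
  have hind : (fun t => max (p r t - p 0 t) 0)
      = Set.indicator (Set.Ici (r/2)) (fun t => p r t - p 0 t) := by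
    funext t
    by_cases ht : t ∈ Set.Ici (r/2)
    · rw [Set.indicator_of_mem ht]
      have : p 0 t ≤ p r t := by
        apply hmono
        have : r/2 ≤ t := ht
        nlinarith
      exact max_eq_left (by linarith)
    · rw [Set.indicator_of_notMem ht]
      have htlt : t < r/2 := lt_of_not_ge ht
      have : p r t ≤ p 0 t := by
        apply hmono
        nlinarith
      exact max_eq_right (by linarith)
  rw [hind, integral_indicator measurableSet_Ici]
  have hint : ∀ (μ : ℝ) (s : Set ℝ), IntegrableOn (p μ) s :=
    fun μ s => (integrable_gaussianPDFReal μ (gV σ)).integrableOn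
  rw [integral_sub (hint r _) (hint 0 _)]
  -- translate the first integral
  have htrans : ∫ t in Set.Ici (r/2), p r t = ∫ t in Set.Ici (-(r/2)), p 0 t := by
    have h1 : ∀ t, p r t = p 0 (t - r) := by
      intro t
      show gaussianPDFReal r (gV σ) t = gaussianPDFReal 0 (gV σ) (t - r)
      rw [gaussianPDFReal_sub, zero_add]
    simp_rw [h1]
    rw [← integral_indicator measurableSet_Ici, ← integral_indicator measurableSet_Ici]
    have := integral_add_right_eq_self (μ := (volume : Measure ℝ))
      (fun t => Set.indicator (Set.Ici (r/2)) (fun s => p 0 (s - r)) t) r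
    rw [← this]
    congr 1
    funext s
    by_cases hs : s ∈ Set.Ici (-(r/2))
    · have hs' : s + r ∈ Set.Ici (r/2) := by
        simp only [Set.mem_Ici] at hs ⊢; linarith
      rw [Set.indicator_of_mem hs', Set.indicator_of_mem hs, add_sub_cancel_right]
    · have hs' : s + r ∉ Set.Ici (r/2) := by
        simp only [Set.mem_Ici] at hs ⊢; intro hc; exact hs (by linarith)
      rw [Set.indicator_of_notMem hs', Set.indicator_of_notMem hs]
  rw [htrans]
  have hsplit : ∫ t in Set.Ici (-(r/2)), p 0 t
      = (∫ t in Set.Ico (-(r/2)) (r/2), p 0 t) + ∫ t in Set.Ici (r/2), p 0 t := by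
    rw [← setIntegral_union ((Set.Iio_disjoint_Ici le_rfl).mono_left
        Set.Ico_subset_Iio_self) measurableSet_Ici (hint 0 _) (hint 0 _),
      Set.Ico_union_Ici_eq_Ici (by linarith)]
  rw [hsplit, add_sub_cancel_right]
  -- bound the integral over Ico by the sup of the density
  have hC : ∀ t, p 0 t ≤ (σ * Real.sqrt (2 * Real.pi))⁻¹ := by
    intro t
    show gaussianPDFReal 0 (gV σ) t ≤ _
    unfold gaussianPDFReal
    simp only [gV_coe]
    have hs : Real.sqrt (2 * Real.pi * σ^2) = σ * Real.sqrt (2 * Real.pi) := by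
      rw [mul_comm (2 * Real.pi) (σ^2), Real.sqrt_mul (sq_nonneg σ), Real.sqrt_sq hσ.le]
    rw [hs]
    calc (σ * Real.sqrt (2 * Real.pi))⁻¹ * Real.exp (-(t - 0)^2 / (2 * σ^2))
        ≤ (σ * Real.sqrt (2 * Real.pi))⁻¹ * 1 := by
          refine mul_le_mul_of_nonneg_left ?_ (by positivity)
          rw [← Real.exp_zero]
          refine Real.exp_le_exp.mpr (div_nonpos_of_nonpos_of_nonneg ?_ (by positivity))
          simp [neg_nonpos, sq_nonneg]
      _ = (σ * Real.sqrt (2 * Real.pi))⁻¹ := mul_one _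
  calc ∫ t in Set.Ico (-(r/2)) (r/2), p 0 t
      ≤ ∫ _t in Set.Ico (-(r/2)) (r/2), (σ * Real.sqrt (2 * Real.pi))⁻¹ := by
        refine setIntegral_mono_on (hint 0 _) ((integrableOn_const_iff (by finiteness)).mpr ?_)
          measurableSet_Ico (fun t _ => hC t)
        right
        rw [Real.volume_Ico]
        exact ENNReal.ofReal_lt_top
    _ = r / (σ * Real.sqrt (2 * Real.pi)) := by
        rw [setIntegral_const, Real.volume_real_Ico_of_le (by linarith), smul_eq_mul]
        rw [show r/2 - -(r/2) = r by ring, div_eq_mul_inv]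

lemma Mbound (d : ℕ) {σ : ℝ} (hσ : 0 < σ) (δ : EuclideanSpace ℝ (Fin d)) :
    ∫ w, max (gpdfs d σ (w - δ) - gpdfs d σ w) 0
      ≤ ‖δ‖ / (σ * Real.sqrt (2 * Real.pi)) := by
  by_cases hδ : δ = 0
  · simp only [hδ, sub_zero, sub_self, max_self, integral_zero, norm_zero, zero_div, le_refl]
  · set r := ‖δ‖ with hrdef
    have hr : 0 < r := norm_pos_iff.mpr hδ
    set u : EuclideanSpace ℝ (Fin d) := r⁻¹ • δ with hu_def
    have hu : ‖u‖ = 1 := by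
      rw [hu_def, norm_smul, norm_inv, Real.norm_eq_abs, abs_of_pos hr, ← hrdef,
        inv_mul_cancel₀ hr.ne']
    have hδu : δ = r • u := by
      rw [hu_def, smul_smul, mul_inv_cancel₀ hr.ne', one_smul]
    set f : ℝ → ℝ := fun t => max (Real.exp ((2 * r * t - r^2) / (2 * σ^2)) - 1) 0 with hf_def
    have hinn : ∀ w, (inner ℝ δ w : ℝ) = r * (inner ℝ u w : ℝ) := by
      intro w
      conv_lhs => rw [hδu]
      rw [real_inner_smul_left]
    have hpt : ∀ w, max (gpdfs d σ (w - δ) - gpdfs d σ w) 0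
        = f (inner ℝ u w : ℝ) * gpdfs d σ w := by
      intro w
      rw [gpdfs_shift d hσ δ w, hinn w, ← mul_assoc 2 r _, ← hrdef]
      show _ = max (Real.exp ((2 * r * (inner ℝ u w : ℝ) - r ^ 2) / (2 * σ ^ 2)) - 1) 0
        * gpdfs d σ w
      rw [max_mul_of_nonneg _ _ (gpdfs_nonneg d σ w), sub_one_mul, zero_mul]
    calc ∫ w, max (gpdfs d σ (w - δ) - gpdfs d σ w) 0
        = ∫ w, f (inner ℝ u w : ℝ) * gpdfs d σ w := by simp_rw [hpt]
      _ = ∫ t, f t * gaussianPDFReal 0 (gV σ) t := lemA d hσ u hu f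
      _ = ∫ t, max (gaussianPDFReal r (gV σ) t - gaussianPDFReal 0 (gV σ) t) 0 := by
          congr 1
          funext t
          rw [hf_def]
          show max (Real.exp ((2 * r * t - r^2) / (2 * σ^2)) - 1) 0 * _ = _
          rw [max_mul_of_nonneg _ _ (gaussianPDFReal_nonneg 0 (gV σ) t), sub_one_mul,
            zero_mul, ← pdf_shift hσ r t]
      _ ≤ r / (σ * Real.sqrt (2 * Real.pi)) := oneD hσ hr

/-- `|ĥ(x + δ) − ĥ(x)| ≤ ‖δ‖₂/(σ√(2π))`; in particular `ĥ` is
`(1/(σ√(2π)))`-Lipschitz. -/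
theorem stmt_15 (d : ℕ) (σ : ℝ) (hσ : 0 < σ)
    (h : EuclideanSpace ℝ (Fin d) → ℝ) (hmeas : Measurable h)
    (hrange : ∀ x, h x ∈ Set.Icc (0:ℝ) 1) :
    (∀ x δ : EuclideanSpace ℝ (Fin d),
      |gsmooth d σ h (x + δ) - gsmooth d σ h x| ≤ ‖δ‖ / (σ * Real.sqrt (2 * Real.pi))) ∧
    LipschitzWith (Real.toNNReal (σ * Real.sqrt (2 * Real.pi))⁻¹) (gsmooth d σ h) := by
  have hg := gpdfs_integrable d hσ
  have hint : ∀ (y c : EuclideanSpace ℝ (Fin d)),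
      Integrable (fun w => h (y + w) * gpdfs d σ (w - c)) := by
    intro y c
    refine Integrable.mono' (hg.comp_sub_right c) ?_ ?_
    · exact ((hmeas.comp ((continuous_const.add continuous_id).measurable)).mul
        ((gpdfs_measurable d σ).comp
          ((continuous_id.sub continuous_const).measurable))).aestronglyMeasurable
    · filter_upwards with w
      rw [Real.norm_eq_abs, abs_mul, abs_of_nonneg (hrange _).1,
        abs_of_nonneg (gpdfs_nonneg _ _ _)]
      exact mul_le_of_le_one_left (gpdfs_nonneg _ _ _) (hrange _).2
  have hint0 : ∀ y : EuclideanSpace ℝ (Fin d),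
      Integrable (fun w => h (y + w) * gpdfs d σ w) := by
    intro y
    simpa using hint y 0
  have key : ∀ x δ : EuclideanSpace ℝ (Fin d),
      gsmooth d σ h (x + δ) - gsmooth d σ h x ≤ ‖δ‖ / (σ * Real.sqrt (2 * Real.pi)) := by
    intro x δ
    have hstep : gsmooth d σ h (x + δ) = ∫ w, h (x + w) * gpdfs d σ (w - δ) := by
      unfold gsmooth
      rw [← integral_sub_right_eq_self (μ := (volume : Measure (EuclideanSpace ℝ (Fin d))))
        (fun z => h (x + δ + z) * gpdfs d σ z) δ]
      congr 1
      funext w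
      show h (x + δ + (w - δ)) * _ = _
      rw [show x + δ + (w - δ) = x + w by abel]
    have hdiff : gsmooth d σ h (x + δ) - gsmooth d σ h x
        = ∫ w, h (x + w) * (gpdfs d σ (w - δ) - gpdfs d σ w) := by
      rw [hstep]
      show _ - ∫ z, h (x + z) * gpdfs d σ z = _
      rw [← integral_sub (hint x δ) (hint0 x)]
      congr 1
      funext w
      ring
    rw [hdiff]
    have int3 : Integrable (fun w => h (x + w) * (gpdfs d σ (w - δ) - gpdfs d σ w)) := by
      have := (hint x δ).sub (hint0 x)
      simp only [mul_sub]; exact this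
    have int4 : Integrable (fun w => max (gpdfs d σ (w - δ) - gpdfs d σ w) 0) :=
      ((hg.comp_sub_right δ).sub hg).pos_part
    refine le_trans (integral_mono int3 int4 ?_) (Mbound d hσ δ)
    intro w
    rcases le_or_gt 0 (gpdfs d σ (w - δ) - gpdfs d σ w) with hq | hq
    · exact le_trans (mul_le_of_le_one_left hq (hrange _).2) (le_max_left _ _)
    · exact le_trans (mul_nonpos_of_nonneg_of_nonpos (hrange _).1 hq.le) (le_max_right _ _)
  have habs : ∀ x δ : EuclideanSpace ℝ (Fin d),
      |gsmooth d σ h (x + δ) - gsmooth d σ h x| ≤ ‖δ‖ / (σ * Real.sqrt (2 * Real.pi)) := by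
    intro x δ
    refine abs_sub_le_iff.mpr ⟨key x δ, ?_⟩
    have := key (x + δ) (-δ)
    rw [norm_neg, show x + δ + -δ = x by abel] at this
    exact this
  refine ⟨habs, ?_⟩
  refine LipschitzWith.of_dist_le_mul ?_
  intro a b
  have := habs b (a - b)
  rw [show b + (a - b) = a by abel] at this
  rw [Real.dist_eq, dist_eq_norm]
  refine this.trans (le_of_eq ?_)
  rw [Real.coe_toNNReal _ (inv_nonneg.mpr (mul_nonneg hσ.le (Real.sqrt_nonneg _))),
    div_eq_inv_mul]
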